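/- arXiv:2305.18803 — 2 statements merged into one kernel-verified Lean document; each statement's English description precedes it below -/
import Mathlib

section
/- With Z ∈ ℝ^{D×F}, Z† Z = I_F, m, n ∈ ℝ^D, r = m − Z Z† m ≠ 0, b = r/‖r‖², define K = Z_f Z† for some Z_f ∈ ℝ^{D×F}, and define the augmented matrices Z₊ = [Z | m], Z_f₊ = [Z_f | n], with Z₊† the block left inverse (top block Z†(I − m bᵀ), bottom row bᵀ). Then the updated operator satisfies K₊ := Z_f₊ Z₊† = K + (n − K m) bᵀ. -/
open Matrix

/-- Append a column `m` to the matrix `Z`. -/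
def appendCol {D F : ℕ} (Z : Matrix (Fin D) (Fin F) ℝ) (m : Fin D → ℝ) :
    Matrix (Fin D) (Fin (F + 1)) ℝ :=
  Matrix.of fun i => Fin.snoc (Z i) (m i)

lemma appendCol_mul {D E F : ℕ} (A : Matrix (Fin D) (Fin F) ℝ) (v : Fin D → ℝ)
    (B : Matrix (Fin F) (Fin E) ℝ) (b : Fin E → ℝ) :
    appendCol A v * Matrix.of (Fin.snoc B b) = A * B + Matrix.vecMulVec v b := by
  ext i j
  simp [Matrix.mul_apply, appendCol, Fin.sum_univ_castSucc, Matrix.vecMulVec_apply, Fin.snoc]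

lemma mul_vecMulVec' {D F : ℕ} (A : Matrix (Fin D) (Fin F) ℝ) (u : Fin F → ℝ) (v : Fin D → ℝ) :
    A * Matrix.vecMulVec u v = Matrix.vecMulVec (A.mulVec u) v := by
  ext i j
  simp [Matrix.mul_apply, Matrix.vecMulVec_apply, Matrix.mulVec, dotProduct,
    Finset.sum_mul, mul_assoc]

theorem stmt2 (D F : ℕ) (Z Zf : Matrix (Fin D) (Fin F) ℝ) (Zd : Matrix (Fin F) (Fin D) ℝ)
    (hZ : Zd * Z = 1) (m n : Fin D → ℝ)
    (r : Fin D → ℝ) (hr : r = m - Z.mulVec (Zd.mulVec m)) (hr0 : r ≠ 0)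
    (b : Fin D → ℝ) (hb : b = (r ⬝ᵥ r)⁻¹ • r)
    (K : Matrix (Fin D) (Fin D) ℝ) (hK : K = Zf * Zd)
    (W : Matrix (Fin (F + 1)) (Fin D) ℝ)
    (hW : W = Matrix.of (Fin.snoc (Zd * (1 - Matrix.vecMulVec m b)) b)) :
    appendCol Zf n * W = K + Matrix.vecMulVec (n - K.mulVec m) b := by
  subst hK hW
  refine (appendCol_mul Zf n (Zd * (1 - Matrix.vecMulVec m b)) b).trans ?_
  rw [← Matrix.mul_assoc, Matrix.mul_sub, Matrix.mul_one, mul_vecMulVec']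
  have : Matrix.vecMulVec (n - (Zf * Zd).mulVec m) b
      = Matrix.vecMulVec n b - Matrix.vecMulVec ((Zf * Zd).mulVec m) b := by
    ext i j; simp [Matrix.vecMulVec_apply, sub_mul]
  rw [this]
  abel
end

section
/- With Z ∈ ℝ^{D×F}, Z† Z = I_F, m ∈ ℝ^D, r = m − Z Z† m ≠ 0, b = r/‖r‖², X = Z Z†, and Z₊† the block left inverse of [Z | m] as above, one has [Z | m] Z₊† = X + r bᵀ. -/
open Matrix

theorem stmt3 (D F : ℕ) (Z : Matrix (Fin D) (Fin F) ℝ) (Zd : Matrix (Fin F) (Fin D) ℝ)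
    (hZ : Zd * Z = 1) (m : Fin D → ℝ)
    (X : Matrix (Fin D) (Fin D) ℝ) (hX : X = Z * Zd)
    (r : Fin D → ℝ) (hr : r = m - X.mulVec m) (hr0 : r ≠ 0)
    (b : Fin D → ℝ) (hb : b = (r ⬝ᵥ r)⁻¹ • r)
    (W : Matrix (Fin (F + 1)) (Fin D) ℝ)
    (hW : W = Matrix.of (Fin.snoc (Zd * (1 - Matrix.vecMulVec m b)) b)) :
    appendCol Z m * W = X + Matrix.vecMulVec r b := by
  subst hW hX
  ext i j
  simp only [appendCol, Matrix.mul_apply, Matrix.of_apply, Fin.sum_univ_castSucc,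
    Fin.snoc_castSucc, Fin.snoc_last, Matrix.add_apply, Matrix.vecMulVec_apply,
    Matrix.sub_apply, Matrix.one_apply, Matrix.mulVec, dotProduct]
  have h1 : ∀ x : Fin F, (Zd * ((1 : Matrix (Fin D) (Fin D) ℝ) - Matrix.vecMulVec m b)) x j
      = Zd x j - (∑ k, Zd x k * m k) * b j := by
    intro x
    simp only [Matrix.mul_apply, Matrix.sub_apply, Matrix.one_apply, Matrix.vecMulVec_apply,
      mul_sub, Finset.sum_sub_distrib, Finset.sum_mul, mul_ite, mul_one, mul_zero,
      Finset.sum_ite_eq', Finset.mem_univ, if_true]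
    ring_nf
    congr 1
    exact Finset.sum_congr rfl fun k _ => by ring
  erw [Finset.sum_congr rfl fun x _ => congrArg (Z i x * ·) (h1 x)]
  simp only [h1, mul_sub, Finset.sum_sub_distrib, Finset.sum_mul, hr, Pi.sub_apply,
    Matrix.mulVec, dotProduct, Matrix.mul_apply, Finset.sum_mul, Finset.mul_sum]
  ring_nf
  congr 2
  rw [Finset.sum_comm, Finset.mul_sum]
  exact Finset.sum_congr rfl fun x _ => by
    rw [Finset.mul_sum]
    exact Finset.sum_congr rfl fun k _ => by ring
end
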